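/- Let p and q be nonzero homogeneous polynomials in R, of total degrees d_p and d_q respectively, and let g = p/q ∈ K. If σ̂(g) = k • g for some k ∈ F, then there exists an integer i with −d_q ≤ i ≤ d_p such that k = λ₁ ^ i * λ₂ ^ (d_p − d_q − i) (integer powers, which make sense since λ₁ and λ₂ are nonzero). -/

import Mathlib

open MvPolynomial

namespace SemiInvAux

variable {F : Type*} [Field F]

lemma comp_id (f g : MvPolynomial (Fin 2) F →ₐ[F] MvPolynomial (Fin 2) F)
    (h : ∀ i, f (g (X i)) = X i) (p : MvPolynomial (Fin 2) F) : f (g p) = p := by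
  have h2 : f.comp g = AlgHom.id F (MvPolynomial (Fin 2) F) :=
    MvPolynomial.algHom_ext fun i => by simpa using h i
  calc f (g p) = (f.comp g) p := rfl
    _ = p := by rw [h2]; rfl

lemma comp_eq (f g f' g' : MvPolynomial (Fin 2) F →ₐ[F] MvPolynomial (Fin 2) F)
    (h : ∀ i, f (g (X i)) = f' (g' (X i))) (p : MvPolynomial (Fin 2) F) :
    f (g p) = f' (g' p) := by
  have h2 : f.comp g = f'.comp g' := MvPolynomial.algHom_ext fun i => by simpa using h i
  calc f (g p) = (f.comp g) p := rfl
    _ = (f'.comp g') p := by rw [h2]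
    _ = f' (g' p) := rfl

lemma degree_fin2 (d : Fin 2 →₀ ℕ) : d.degree = d 0 + d 1 := by
  rw [Finsupp.degree, ← Fin.sum_univ_two (f := fun i => d i)]
  exact Finset.sum_subset (Finset.subset_univ _)
    (fun i _ hi => by simpa using Finsupp.notMem_support_iff.mp hi)

lemma coeff_diag (l : Fin 2 → F) (P : MvPolynomial (Fin 2) F) (n : Fin 2 →₀ ℕ) :
    coeff n (aeval (fun i : Fin 2 => C (l i) * X i) P)
      = l 0 ^ n 0 * l 1 ^ n 1 * coeff n P := by
  induction P using MvPolynomial.induction_on' with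
  | add p q ih1 ih2 => simp only [map_add, coeff_add, ih1, ih2]; ring
  | monomial s c =>
    have key : (aeval (fun i : Fin 2 => C (l i) * X i)) (monomial s c)
        = monomial s (l 0 ^ s 0 * l 1 ^ s 1 * c) := by
      rw [aeval_monomial, Finsupp.prod_fintype _ _ (fun i => pow_zero _), Fin.prod_univ_two,
        monomial_eq, Finsupp.prod_fintype _ _ (fun i => pow_zero _), Fin.prod_univ_two]
      simp only [algebraMap_eq, mul_pow, ← C_pow, map_mul]
      ring
    rw [key, coeff_monomial, coeff_monomial]
    split_ifs with h
    · subst h; ring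
    · ring

end SemiInvAux

set_option maxHeartbeats 1600000 in
open SemiInvAux in
theorem semi_invariant_rational_structure
    {F : Type*} [Field F] (u v : F) (hu : u ≠ 0)
    (σ : MvPolynomial (Fin 2) F →ₐ[F] MvPolynomial (Fin 2) F)
    (hσα : σ (X 0) = X 1)
    (hσβ : σ (X 1) = u • X 0 + v • X 1)
    (σK : FractionRing (MvPolynomial (Fin 2) F) ≃+*
          FractionRing (MvPolynomial (Fin 2) F))
    (hσK : ∀ r : MvPolynomial (Fin 2) F,
      σK (algebraMap (MvPolynomial (Fin 2) F) (FractionRing (MvPolynomial (Fin 2) F)) r) =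
        algebraMap (MvPolynomial (Fin 2) F) (FractionRing (MvPolynomial (Fin 2) F)) (σ r))
    (lam₁ lam₂ : F)
    (hroot₁ : lam₁ ^ 2 - v * lam₁ - u = 0)
    (hroot₂ : lam₂ ^ 2 - v * lam₂ - u = 0)
    (hne : lam₁ ≠ lam₂)
    (hnotroot : ∀ k : ℕ, 1 ≤ k → lam₁ ^ k ≠ lam₂ ^ k)
    (p q : MvPolynomial (Fin 2) F) (hp : p ≠ 0) (hq : q ≠ 0)
    (dp dq : ℕ) (hphom : p.IsHomogeneous dp) (hqhom : q.IsHomogeneous dq)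
    (k : F)
    (hsemi : σK (algebraMap (MvPolynomial (Fin 2) F) (FractionRing (MvPolynomial (Fin 2) F)) p /
                 algebraMap (MvPolynomial (Fin 2) F) (FractionRing (MvPolynomial (Fin 2) F)) q) =
      algebraMap (MvPolynomial (Fin 2) F) (FractionRing (MvPolynomial (Fin 2) F)) (C k) *
        (algebraMap (MvPolynomial (Fin 2) F) (FractionRing (MvPolynomial (Fin 2) F)) p /
         algebraMap (MvPolynomial (Fin 2) F) (FractionRing (MvPolynomial (Fin 2) F)) q)) :
    ∃ i : ℤ, -(dq : ℤ) ≤ i ∧ i ≤ (dp : ℤ) ∧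
      k = lam₁ ^ i * lam₂ ^ ((dp : ℤ) - (dq : ℤ) - i) := by
  classical
  have hl1 : lam₁ ≠ 0 := by
    intro h; apply hu; rw [h] at hroot₁; linear_combination -hroot₁
  have hl2 : lam₂ ≠ 0 := by
    intro h; apply hu; rw [h] at hroot₂; linear_combination -hroot₂
  have hlsub : lam₁ - lam₂ ≠ 0 := sub_ne_zero.mpr hne
  set c : F := (lam₁ - lam₂)⁻¹ with hcdef
  have hc : (lam₁ - lam₂) * c = 1 := mul_inv_cancel₀ hlsub
  -- the C-level identities
  have hCc : (C lam₁ - C lam₂ : MvPolynomial (Fin 2) F) * C c = 1 := by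
    rw [← map_sub, ← map_mul, hc, map_one]
  have hC1 : (C lam₁ : MvPolynomial (Fin 2) F) ^ 2 - C v * C lam₁ - C u = 0 := by
    have := congrArg (C : F →+* MvPolynomial (Fin 2) F) hroot₁
    simpa [map_sub, map_mul, map_pow] using this
  have hC2 : (C lam₂ : MvPolynomial (Fin 2) F) ^ 2 - C v * C lam₂ - C u = 0 := by
    have := congrArg (C : F →+* MvPolynomial (Fin 2) F) hroot₂
    simpa [map_sub, map_mul, map_pow] using this
  have hCu : (C u : MvPolynomial (Fin 2) F) * C u⁻¹ = 1 := by
    rw [← map_mul, mul_inv_cancel₀ hu, map_one]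
  -- the algebra endomorphisms
  set θ : MvPolynomial (Fin 2) F →ₐ[F] MvPolynomial (Fin 2) F :=
    aeval ![C (lam₁ - v) * X 0 + X 1, C (lam₂ - v) * X 0 + X 1] with hθdef
  set θ' : MvPolynomial (Fin 2) F →ₐ[F] MvPolynomial (Fin 2) F :=
    aeval ![C c * X 0 - C c * X 1, C ((v - lam₂) * c) * X 0 + C ((lam₁ - v) * c) * X 1]
    with hθ'def
  set D : MvPolynomial (Fin 2) F →ₐ[F] MvPolynomial (Fin 2) F := aeval (fun i : Fin 2 => C ((![lam₁, lam₂] : Fin 2 → F) i) * X i)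
    with hDdef
  set ρ : MvPolynomial (Fin 2) F →ₐ[F] MvPolynomial (Fin 2) F := aeval ![C u⁻¹ * X 1 - C (v * u⁻¹) * X 0, X 0] with hρdef
  have hθX0 : θ (X 0) = C (lam₁ - v) * X 0 + X 1 := by
    rw [hθdef, aeval_X]; simp
  have hθX1 : θ (X 1) = C (lam₂ - v) * X 0 + X 1 := by
    rw [hθdef, aeval_X]; simp
  have hθ'X0 : θ' (X 0) = C c * X 0 - C c * X 1 := by
    rw [hθ'def, aeval_X]; simp
  have hθ'X1 : θ' (X 1) = C ((v - lam₂) * c) * X 0 + C ((lam₁ - v) * c) * X 1 := by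
    rw [hθ'def, aeval_X]; simp
  have hDX0 : D (X 0) = C lam₁ * X 0 := by rw [hDdef, aeval_X]; simp
  have hDX1 : D (X 1) = C lam₂ * X 1 := by rw [hDdef, aeval_X]; simp
  have hρX0 : ρ (X 0) = C u⁻¹ * X 1 - C (v * u⁻¹) * X 0 := by rw [hρdef, aeval_X]; simp
  have hρX1 : ρ (X 1) = X 0 := by rw [hρdef, aeval_X]; simp
  have hCco : ∀ (f : (MvPolynomial (Fin 2) F) →ₐ[F] (MvPolynomial (Fin 2) F)) (a : F),
      f (C a) = C a := by
    intro f a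
    rw [← MvPolynomial.algebraMap_eq]
    exact f.commutes a
  -- composition identities
  have hρσ : ∀ r : MvPolynomial (Fin 2) F, ρ (σ r) = r := by
    refine comp_id ρ σ (fun i => ?_)
    fin_cases i
    · show ρ (σ (X 0)) = X 0
      rw [hσα, hρX1]
    · show ρ (σ (X 1)) = X 1
      rw [hσβ]
      simp only [smul_eq_C_mul, map_add, map_sub, map_mul, hρX0, hρX1, hCco]
      linear_combination (X 1 - C v * X 0 : MvPolynomial (Fin 2) F) * hCu
  have hθθ' : ∀ r : MvPolynomial (Fin 2) F, θ (θ' r) = r := by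
    refine comp_id θ θ' (fun i => ?_)
    fin_cases i
    · show θ (θ' (X 0)) = X 0
      rw [hθ'X0]
      simp only [map_add, map_sub, map_mul, hθX0, hθX1, hCco]
      linear_combination (X 0 : MvPolynomial (Fin 2) F) * hCc
    · show θ (θ' (X 1)) = X 1
      rw [hθ'X1]
      simp only [map_add, map_sub, map_mul, hθX0, hθX1, hCco]
      linear_combination (X 1 : MvPolynomial (Fin 2) F) * hCc
  have hθ'θ : ∀ r : MvPolynomial (Fin 2) F, θ' (θ r) = r := by
    refine comp_id θ' θ (fun i => ?_)
    fin_cases i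
    · show θ' (θ (X 0)) = X 0
      rw [hθX0]
      simp only [map_add, map_sub, map_mul, hθ'X0, hθ'X1, hCco]
      linear_combination (X 0 : MvPolynomial (Fin 2) F) * hCc
    · show θ' (θ (X 1)) = X 1
      rw [hθX1]
      simp only [map_add, map_sub, map_mul, hθ'X0, hθ'X1, hCco]
      linear_combination (X 1 : MvPolynomial (Fin 2) F) * hCc
  have hσθ : ∀ r : MvPolynomial (Fin 2) F, σ (θ r) = θ (D r) := by
    refine comp_eq σ θ θ D (fun i => ?_)
    fin_cases i
    · show σ (θ (X 0)) = θ (D (X 0))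
      rw [hθX0, hDX0]
      simp only [map_add, map_sub, map_mul, hσα, hσβ, hθX0, hθX1, hCco, smul_eq_C_mul]
      linear_combination (-(X 0) : MvPolynomial (Fin 2) F) * hC1
    · show σ (θ (X 1)) = θ (D (X 1))
      rw [hθX1, hDX1]
      simp only [map_add, map_sub, map_mul, hσα, hσβ, hθX0, hθX1, hCco, smul_eq_C_mul]
      linear_combination (-(X 0) : MvPolynomial (Fin 2) F) * hC2
  -- injectivity consequences
  have hθinj : Function.Injective θ := fun a b h => by
    rw [← hθ'θ a, ← hθ'θ b, h]
  have hσq : σ q ≠ 0 := fun h => hq (by rw [← hρσ q, h, map_zero])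
  -- cross-multiplied relation in R
  set ι : MvPolynomial (Fin 2) F →+* FractionRing (MvPolynomial (Fin 2) F) :=
    algebraMap _ _ with hιdef
  have hιinj : Function.Injective ι := IsFractionRing.injective (MvPolynomial (Fin 2) F) (FractionRing (MvPolynomial (Fin 2) F))
  have hιq : ι q ≠ 0 := fun h => hq (hιinj (by rw [h, map_zero]))
  have hισq : ι (σ q) ≠ 0 := fun h => hσq (hιinj (by rw [h, map_zero]))
  have key : σ p * q = C k * (p * σ q) := by
    apply hιinj
    rw [map_div₀] at hsemi
    rw [hσK p, hσK q] at hsemi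
    field_simp at hsemi
    rw [map_mul, map_mul, map_mul]
    linear_combination hsemi
  -- transport to diagonal coordinates
  set P := θ' p with hPdef
  set Q := θ' q with hQdef
  have hθP : θ P = p := hθθ' p
  have hθQ : θ Q = q := hθθ' q
  have hPne : P ≠ 0 := fun h => hp (by rw [← hθP, h, map_zero])
  have hQne : Q ≠ 0 := fun h => hq (by rw [← hθQ, h, map_zero])
  have hdeg1 : ∀ i : Fin 2,
      ((![C c * X 0 - C c * X 1,
        C ((v - lam₂) * c) * X 0 + C ((lam₁ - v) * c) * X 1] : Fin 2 → MvPolynomial (Fin 2) F) i).IsHomogeneous 1 := by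
    intro i
    fin_cases i
    · show (C c * X 0 - C c * X 1 : MvPolynomial (Fin 2) F).IsHomogeneous 1
      exact ((isHomogeneous_X F 0).C_mul c).sub ((isHomogeneous_X F 1).C_mul c)
    · show (C ((v - lam₂) * c) * X 0 + C ((lam₁ - v) * c) * X 1 : MvPolynomial (Fin 2) F).IsHomogeneous 1
      exact ((isHomogeneous_X F 0).C_mul _).add ((isHomogeneous_X F 1).C_mul _)
  have hPhom : P.IsHomogeneous dp := by
    have := hphom.aeval _ hdeg1
    rwa [one_mul] at this
  have hQhom : Q.IsHomogeneous dq := by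
    have := hqhom.aeval _ hdeg1
    rwa [one_mul] at this
  have key2 : D P * Q = C k * (P * D Q) := by
    apply hθinj
    rw [map_mul, map_mul, map_mul, ← hσθ P, ← hσθ Q, hθP, hθQ, hCco θ]
    exact key
  -- choose extremal monomials
  obtain ⟨mP, hmPs, hmPmax⟩ :=
    Finset.exists_max_image P.support (fun d => d 0) (support_nonempty.mpr hPne)
  obtain ⟨mQ, hmQs, hmQmax⟩ :=
    Finset.exists_max_image Q.support (fun d => d 0) (support_nonempty.mpr hQne)
  have hcP : coeff mP P ≠ 0 := mem_support_iff.mp hmPs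
  have hcQ : coeff mQ Q ≠ 0 := mem_support_iff.mp hmQs
  have hmPdeg : mP 0 + mP 1 = dp := by
    rw [← degree_fin2]
    rw [Finsupp.degree_eq_weight_one]
    exact hPhom hcP
  have hmQdeg : mQ 0 + mQ 1 = dq := by
    rw [← degree_fin2, Finsupp.degree_eq_weight_one]
    exact hQhom hcQ
  have uniq : ∀ s t : Fin 2 →₀ ℕ, s + t = mP + mQ →
      coeff s P ≠ 0 → coeff t Q ≠ 0 → s = mP ∧ t = mQ := by
    intro s t hst hsP htQ
    have hs0 : s 0 ≤ mP 0 := hmPmax s (mem_support_iff.mpr hsP)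
    have ht0 : t 0 ≤ mQ 0 := hmQmax t (mem_support_iff.mpr htQ)
    have hsum0 : s 0 + t 0 = mP 0 + mQ 0 := by
      have := DFunLike.congr_fun hst (0 : Fin 2)
      simpa [Finsupp.add_apply] using this
    have hsum1 : s 1 + t 1 = mP 1 + mQ 1 := by
      have := DFunLike.congr_fun hst (1 : Fin 2)
      simpa [Finsupp.add_apply] using this
    have hsdeg : s 0 + s 1 = dp := by
      rw [← degree_fin2, Finsupp.degree_eq_weight_one]; exact hPhom hsP
    have htdeg : t 0 + t 1 = dq := by
      rw [← degree_fin2, Finsupp.degree_eq_weight_one]; exact hQhom htQ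
    have hseq : s = mP := by
      ext i
      fin_cases i
      · show s 0 = mP 0; omega
      · show s 1 = mP 1; omega
    refine ⟨hseq, ?_⟩
    ext i
    fin_cases i
    · show t 0 = mQ 0; omega
    · show t 1 = mQ 1; omega
  have hDcoeff : ∀ (A : MvPolynomial (Fin 2) F) (n : Fin 2 →₀ ℕ),
      coeff n (D A) = lam₁ ^ n 0 * lam₂ ^ n 1 * coeff n A := by
    intro A n
    have := coeff_diag (![lam₁, lam₂] : Fin 2 → F) A n
    simpa [hDdef] using this
  have hL : coeff (mP + mQ) (D P * Q)
      = lam₁ ^ mP 0 * lam₂ ^ mP 1 * coeff mP P * coeff mQ Q := by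
    rw [coeff_mul, Finset.sum_eq_single ((mP, mQ) : (Fin 2 →₀ ℕ) × (Fin 2 →₀ ℕ))]
    · rw [hDcoeff]
    · rintro ⟨s, t⟩ hst hne'
      rw [Finset.HasAntidiagonal.mem_antidiagonal] at hst
      by_contra h0
      have hs : coeff s P ≠ 0 := by
        intro hh; apply h0; rw [hDcoeff, hh]; ring
      have ht : coeff t Q ≠ 0 := fun hh => h0 (by rw [hh, mul_zero])
      obtain ⟨e1, e2⟩ := uniq s t hst hs ht
      exact hne' (by rw [e1, e2])
    · intro hnm
      exfalso
      exact hnm (Finset.HasAntidiagonal.mem_antidiagonal.mpr rfl)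
  have hPDQ : coeff (mP + mQ) (P * D Q)
      = coeff mP P * (lam₁ ^ mQ 0 * lam₂ ^ mQ 1 * coeff mQ Q) := by
    rw [coeff_mul, Finset.sum_eq_single ((mP, mQ) : (Fin 2 →₀ ℕ) × (Fin 2 →₀ ℕ))]
    · rw [hDcoeff]
    · rintro ⟨s, t⟩ hst hne'
      rw [Finset.HasAntidiagonal.mem_antidiagonal] at hst
      by_contra h0
      have hs : coeff s P ≠ 0 := by
        intro hh; apply h0; rw [hh]; ring
      have ht : coeff t Q ≠ 0 := by
        intro hh; apply h0; rw [hDcoeff, hh]; ring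
      obtain ⟨e1, e2⟩ := uniq s t hst hs ht
      exact hne' (by rw [e1, e2])
    · intro hnm
      exfalso
      exact hnm (Finset.HasAntidiagonal.mem_antidiagonal.mpr rfl)
  have hR : coeff (mP + mQ) (C k * (P * D Q))
      = k * (coeff mP P * (lam₁ ^ mQ 0 * lam₂ ^ mQ 1 * coeff mQ Q)) := by
    rw [coeff_C_mul, hPDQ]
  have E : lam₁ ^ mP 0 * lam₂ ^ mP 1 * coeff mP P * coeff mQ Q
      = k * (coeff mP P * (lam₁ ^ mQ 0 * lam₂ ^ mQ 1 * coeff mQ Q)) := by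
    rw [← hL, ← hR, key2]
  have hcc : coeff mP P * coeff mQ Q ≠ 0 := mul_ne_zero hcP hcQ
  have hk : k * (lam₁ ^ mQ 0 * lam₂ ^ mQ 1) = lam₁ ^ mP 0 * lam₂ ^ mP 1 := by
    apply mul_right_cancel₀ hcc
    linear_combination -E
  refine ⟨(mP 0 : ℤ) - (mQ 0 : ℤ), by omega, by omega, ?_⟩
  have h3 : (dp : ℤ) - (dq : ℤ) - ((mP 0 : ℤ) - (mQ 0 : ℤ)) = (mP 1 : ℤ) - (mQ 1 : ℤ) := by
    omega
  rw [h3, zpow_sub₀ hl1, zpow_sub₀ hl2, zpow_natCast, zpow_natCast, zpow_natCast, zpow_natCast]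
  field_simp
  linear_combination hk
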